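/- Fix s, z > 0 and let c = min(|1 − s/z|, 1) and t = (1 + c)s. Define g(a) = max(z − a, min(s − z, z)) for a ≤ s and g(a) = 0 for s < a ≤ t, and define h(a) = z for a ≤ cs and h(a) = (z/s)(s − (a − cs)) for cs < a ≤ t. Then g(a) ≤ h(a) for all a ∈ (0, t). -/
import Mathlib


theorem stmt_3 (s z : ℝ) (hs : 0 < s) (hz : 0 < z) :
    let c := min |1 - s / z| 1
    let t := (1 + c) * s
    let g : ℝ → ℝ := fun a => if a ≤ s then max (z - a) (min (s - z) z) else 0
    let h : ℝ → ℝ := fun a => if a ≤ c * s then z else (z / s) * (s - (a - c * s))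
    ∀ a ∈ Set.Ioo (0:ℝ) t, g a ≤ h a := by
  intro c t g h a ha
  obtain ⟨ha0, hat⟩ := ha
  have hc0 : 0 ≤ c := le_min (abs_nonneg _) one_pos.le
  have hc1 : c ≤ 1 := min_le_right _ _
  have hzc : z * c = min |z - s| z := by
    have h1 : z * c = min (z * |1 - s / z|) (z * 1) := by
      simp only [c]
      rw [mul_min_of_nonneg _ _ hz.le]
    have h2 : z * |1 - s / z| = |z - s| := by
      have h3 : z - s = z * (1 - s / z) := by field_simp
      rw [h3, abs_mul, abs_of_pos hz]
    rw [h1, h2, mul_one]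
  have hzc1 : min (s - z) z ≤ z * c := by
    rw [hzc]
    refine min_le_min ?_ le_rfl
    calc s - z = -(z - s) := by ring
    _ ≤ |z - s| := neg_le_abs _
  have hzc2 : z - s ≤ z * c := by
    rw [hzc]
    exact le_min (le_abs_self _) (by linarith)
  have hu : z / s * s = z := div_mul_cancel₀ z hs.ne'
  have hup : 0 < z / s := div_pos hz hs
  have hat' : a < (1 + c) * s := hat
  simp only [g, h]
  split_ifs with h1 h2 h3
  · -- a ≤ s, a ≤ c*s : goal max ≤ z
    exact max_le (by linarith) (min_le_right _ _)
  · -- a ≤ s, ¬ a ≤ c*s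
    push_neg at h2
    refine max_le ?_ ?_
    · rcases le_total z s with hzs | hzs
      · have hu1 : z / s ≤ 1 := (div_le_one hs).2 hzs
        nlinarith [mul_nonneg ha0.le (sub_nonneg.2 hu1)]
      · have hu1 : 1 ≤ z / s := (one_le_div hs).2 hzs
        nlinarith [mul_nonneg (sub_nonneg.2 h1) (sub_nonneg.2 hu1)]
    · nlinarith [mul_le_mul_of_nonneg_left h1 hup.le]
  · exfalso
    push_neg at h1
    nlinarith
  · push_neg at h1 h3
    have : 0 ≤ s - (a - c * s) := by nlinarith
    positivity
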